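/- For every finite simple graph G, the independence polynomial I(G∘2K_1; x) of the corona of G with the edgeless graph on two vertices is unimodal. -/

import Mathlib

open Polynomial Finset
open scoped Classical

/-- A set of vertices is independent if its elements are pairwise non-adjacent. -/
def IsIndepSet {V : Type*} (G : SimpleGraph V) (s : Finset V) : Prop :=
  ∀ u ∈ s, ∀ v ∈ s, u ≠ v → ¬ G.Adj u v

/-- The independence number: maximum cardinality of an independent set. -/
noncomputable def indepNum {V : Type*} [Fintype V] (G : SimpleGraph V) : ℕ :=
  (Finset.univ.filter (fun s : Finset V => IsIndepSet G s)).sup Finset.card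

/-- The number of independent sets of cardinality `k`. -/
noncomputable def indepCount {V : Type*} [Fintype V] (G : SimpleGraph V) (k : ℕ) : ℕ :=
  (Finset.univ.filter (fun s : Finset V => IsIndepSet G s ∧ s.card = k)).card

/-- The independence polynomial `I(G;x) = ∑ s_k x^k`. -/
noncomputable def indepPoly {V : Type*} [Fintype V] (G : SimpleGraph V) : Polynomial ℝ :=
  ∑ k ∈ Finset.range (indepNum G + 1), Polynomial.C (indepCount G k : ℝ) * Polynomial.X ^ k

/-- The corona `G ∘ H`: take `G` together with `|V(G)|` disjoint copies of `H`,
joining each vertex `v` of `G` to all vertices of the `v`-th copy of `H`. -/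
def corona {V W : Type*} (G : SimpleGraph V) (H : SimpleGraph W) :
    SimpleGraph (V ⊕ V × W) where
  Adj x y :=
    match x, y with
    | Sum.inl u, Sum.inl v => G.Adj u v
    | Sum.inl u, Sum.inr (v, _) => u = v
    | Sum.inr (v, _), Sum.inl u => u = v
    | Sum.inr (v, w), Sum.inr (v', w') => v = v' ∧ H.Adj w w'
  symm := ⟨by
    rintro (u | ⟨v, w⟩) (u' | ⟨v', w'⟩) h
    · exact G.symm.symm _ _ h
    · exact h
    · exact h
    · exact ⟨h.1.symm, H.symm.symm _ _ h.2⟩⟩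
  loopless := ⟨by
    rintro (u | ⟨v, w⟩) h
    · exact G.loopless.irrefl u h
    · exact H.loopless.irrefl w h.2⟩

/-- The disjoint union of two graphs. -/
def disjUnion {V W : Type*} (G : SimpleGraph V) (H : SimpleGraph W) :
    SimpleGraph (V ⊕ W) where
  Adj x y :=
    match x, y with
    | Sum.inl a, Sum.inl b => G.Adj a b
    | Sum.inr a, Sum.inr b => H.Adj a b
    | _, _ => False
  symm := ⟨by
    rintro (a | a) (b | b) h
    · exact G.symm.symm _ _ h
    · exact h.elim
    · exact h.elim
    · exact H.symm.symm _ _ h⟩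
  loopless := ⟨by
    rintro (a | a) h
    · exact G.loopless.irrefl a h
    · exact H.loopless.irrefl a h⟩

/-- The Zykov sum (join) of two graphs. -/
def zykovSum {V W : Type*} (G : SimpleGraph V) (H : SimpleGraph W) :
    SimpleGraph (V ⊕ W) where
  Adj x y :=
    match x, y with
    | Sum.inl a, Sum.inl b => G.Adj a b
    | Sum.inr a, Sum.inr b => H.Adj a b
    | _, _ => True
  symm := ⟨by
    rintro (a | a) (b | b) h
    · exact G.symm.symm _ _ h
    · trivial
    · trivial
    · exact H.symm.symm _ _ h⟩
  loopless := ⟨by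
    rintro (a | a) h
    · exact G.loopless.irrefl a h
    · exact H.loopless.irrefl a h⟩

/-- `K_p - e`: the complete graph on `Fin p` minus the edge joining vertices `0` and `1`. -/
def completeMinusEdge (p : ℕ) : SimpleGraph (Fin p) where
  Adj a b := a ≠ b ∧ ¬(a.val ≤ 1 ∧ b.val ≤ 1)
  symm := ⟨fun a b ⟨h1, h2⟩ => ⟨h1.symm, fun ⟨hb, ha⟩ => h2 ⟨ha, hb⟩⟩⟩
  loopless := ⟨fun a ⟨h, _⟩ => h rfl⟩

/-- The clique number of a graph. -/
noncomputable def cliqueNum {V : Type*} [Fintype V] (G : SimpleGraph V) : ℕ :=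
  (Finset.univ.filter (fun s : Finset V => G.IsClique ↑s)).sup Finset.card

/-- A graph is perfect if every induced subgraph has chromatic number
equal to its clique number. -/
def IsPerfect {V : Type*} [Fintype V] (G : SimpleGraph V) : Prop :=
  ∀ s : Set V, (G.induce s).chromaticNumber = (cliqueNum (G.induce s) : ℕ∞)

/-- The coefficient sequence `(a_0, …, a_n)` of a polynomial (indexed up to its
degree `n`) is symmetric, i.e. `a_i = a_{n-i}`. -/
def CoeffSymmetric (P : Polynomial ℝ) : Prop :=
  ∀ i ≤ P.natDegree, P.coeff i = P.coeff (P.natDegree - i)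

/-- The coefficient sequence of a polynomial is unimodal with mode `k`. -/
def IsMode (P : Polynomial ℝ) (k : ℕ) : Prop :=
  k ≤ P.natDegree ∧ (∀ i, i < k → P.coeff i ≤ P.coeff (i + 1)) ∧
    (∀ i, k ≤ i → i < P.natDegree → P.coeff (i + 1) ≤ P.coeff i)

/-- The coefficient sequence of a polynomial is unimodal. -/
def CoeffUnimodal (P : Polynomial ℝ) : Prop :=
  ∃ k, IsMode P k

/-- `k` is the unique index achieving the maximal coefficient of `P`. -/
def IsUniqueMode (P : Polynomial ℝ) (k : ℕ) : Prop :=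
  k ≤ P.natDegree ∧ ∀ j ≤ P.natDegree, j ≠ k → P.coeff j < P.coeff k

/-- The polynomial has a unique mode. -/
def HasUniqueMode (P : Polynomial ℝ) : Prop :=
  ∃ k, IsUniqueMode P k


lemma nat_choose_succ_le_aux {m j : ℕ} (h : m ≤ 2 * j) : m.choose (j + 1) ≤ m.choose j := by
  rcases le_or_gt (j + 1) m with hle | hlt
  · have hj : j ≤ m := by omega
    rw [← Nat.choose_symm hle, ← Nat.choose_symm hj]
    have h1 : m - j = (m - (j + 1)) + 1 := by omega
    rw [h1]
    exact Nat.choose_le_succ_of_lt_half_left (by omega)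
  · rw [Nat.choose_eq_zero_of_lt hlt]; exact Nat.zero_le _

lemma indep_corona_iff_aux {V : Type*} (G : SimpleGraph V) (s : Finset (V ⊕ V × Fin 2)) :
    IsIndepSet (corona G (⊥ : SimpleGraph (Fin 2))) s ↔
      (IsIndepSet G s.toLeft ∧ ∀ p ∈ s.toRight, p.1 ∉ s.toLeft) := by
  constructor
  · intro h
    refine ⟨?_, ?_⟩
    · intro u hu v hv huv hadj
      exact h (Sum.inl u) (Finset.mem_toLeft.1 hu) (Sum.inl v) (Finset.mem_toLeft.1 hv)
        (fun he => huv (Sum.inl.inj he)) hadj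
    · rintro ⟨v, w⟩ hp hv
      exact h (Sum.inl v) (Finset.mem_toLeft.1 hv) (Sum.inr (v, w)) (Finset.mem_toRight.1 hp)
        (by simp) rfl
  · rintro ⟨h1, h2⟩ (u | ⟨v, w⟩) hu (u' | ⟨v', w'⟩) hu' hne hadj
    · exact h1 u (Finset.mem_toLeft.2 hu) u' (Finset.mem_toLeft.2 hu')
        (fun he => hne (congrArg Sum.inl he)) hadj
    · have hadj' : u = v' := hadj
      subst hadj'
      exact h2 (u, w') (Finset.mem_toRight.2 hu') (Finset.mem_toLeft.2 hu)
    · have hadj' : u' = v := hadj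
      subst hadj'
      exact h2 (u', w) (Finset.mem_toRight.2 hu) (Finset.mem_toLeft.2 hu')
    · exact hadj.2.elim

lemma corona_count_aux {V : Type*} [Fintype V] (G : SimpleGraph V) (j : ℕ) :
    indepCount (corona G (⊥ : SimpleGraph (Fin 2))) j =
      ∑ A ∈ Finset.univ.filter (fun A : Finset V => IsIndepSet G A),
        (if A.card ≤ j then ((Fintype.card V - A.card) * 2).choose (j - A.card) else 0) := by
  classical
  rw [indepCount]
  rw [Finset.card_eq_sum_card_fiberwise
    (f := fun s : Finset (V ⊕ V × Fin 2) => s.toLeft)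
    (t := Finset.univ.filter (fun A : Finset V => IsIndepSet G A))
    (fun x hx => by
      simp only [Finset.mem_coe, Finset.mem_filter, Finset.mem_univ, true_and] at hx ⊢
      exact ((indep_corona_iff_aux G x).1 hx.1).1)]
  refine Finset.sum_congr rfl (fun A hA => ?_)
  simp only [Finset.mem_filter, Finset.mem_univ, true_and] at hA
  by_cases hAj : A.card ≤ j
  · rw [if_pos hAj]
    rw [show ((Fintype.card V - A.card) * 2).choose (j - A.card) =
        (((Finset.univ \ A) ×ˢ (Finset.univ : Finset (Fin 2))).powersetCard (j - A.card)).card by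
      rw [Finset.card_powersetCard, Finset.card_product, Finset.card_sdiff_of_subset (Finset.subset_univ A),
        Finset.card_univ, Finset.card_univ, Fintype.card_fin]]
    refine Finset.card_bij' (fun s _ => s.toRight)
      (fun B _ => A.disjSum B) ?_ ?_ ?_ ?_
    · intro s hs
      simp only [Finset.mem_filter, Finset.mem_univ, true_and] at hs
      obtain ⟨⟨hind, hcard⟩, htl⟩ := hs
      obtain ⟨h1, h2⟩ := (indep_corona_iff_aux G s).1 hind
      rw [Finset.mem_powersetCard]
      constructor
      · intro p hp
        rw [Finset.mem_product]
        refine ⟨Finset.mem_sdiff.2 ⟨Finset.mem_univ _, ?_⟩, Finset.mem_univ _⟩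
        rw [← htl]; exact h2 p hp
      · show s.toRight.card = j - A.card
        have h3 := s.card_toLeft_add_card_toRight
        have h4 : s.toLeft.card = A.card := by rw [htl]
        omega
    · intro B hB
      rw [Finset.mem_powersetCard] at hB
      obtain ⟨hBsub, hBcard⟩ := hB
      simp only [Finset.mem_filter, Finset.mem_univ, true_and]
      refine ⟨⟨?_, ?_⟩, ?_⟩
      · rw [indep_corona_iff_aux]
        constructor
        · simpa using hA
        · intro p hp
          simp only [Finset.toRight_disjSum] at hp
          simp only [Finset.toLeft_disjSum]
          have := hBsub hp
          rw [Finset.mem_product, Finset.mem_sdiff] at this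
          exact this.1.2
      · rw [Finset.card_disjSum]; omega
      · simp
    · intro s hs
      simp only [Finset.mem_filter] at hs
      show A.disjSum s.toRight = s
      have := s.toLeft_disjSum_toRight
      rw [hs.2] at this
      exact this
    · intro B _
      simp
  · rw [if_neg hAj]
    rw [Finset.card_eq_zero]
    refine Finset.eq_empty_of_forall_notMem (fun s hs => ?_)
    simp only [Finset.mem_filter, Finset.mem_univ, true_and] at hs
    obtain ⟨⟨_, hcard⟩, htl⟩ := hs
    have := s.card_toLeft_le
    rw [htl, hcard] at this
    exact hAj this

/-- `I(G ∘ 2K₁; x)` is unimodal for every graph `G`. -/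
theorem corona_2K1_unimodal {V : Type*} [Fintype V] (G : SimpleGraph V) :
    let s := indepCount (corona G (⊥ : SimpleGraph (Fin 2)))
    let α := indepNum (corona G (⊥ : SimpleGraph (Fin 2)))
    ∃ k ≤ α, (∀ i, i < k → s i ≤ s (i + 1)) ∧
      (∀ i, k ≤ i → i < α → s (i + 1) ≤ s i) := by
  intro s α
  classical
  refine ⟨Fintype.card V, ?_, ?_, ?_⟩
  · -- Fintype.card V ≤ α
    have hmem : (Finset.univ.map ⟨fun v : V => Sum.inr (v, (0 : Fin 2)),
        fun a b h => by simpa using congrArg (Sum.elim id Prod.fst) h⟩ :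
        Finset (V ⊕ V × Fin 2)) ∈
        Finset.univ.filter (fun t : Finset (V ⊕ V × Fin 2) =>
          IsIndepSet (corona G (⊥ : SimpleGraph (Fin 2))) t) := by
      simp only [Finset.mem_filter, Finset.mem_univ, true_and]
      intro x hx y hy hne hadj
      simp only [Finset.mem_map, Finset.mem_univ, true_and, Function.Embedding.coeFn_mk] at hx hy
      obtain ⟨v, rfl⟩ := hx
      obtain ⟨v', rfl⟩ := hy
      exact hadj.2.elim
    have := Finset.le_sup (f := Finset.card) hmem
    simpa [α, indepNum] using this
  · intro i hi
    show indepCount (corona G (⊥ : SimpleGraph (Fin 2))) i ≤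
      indepCount (corona G (⊥ : SimpleGraph (Fin 2))) (i + 1)
    rw [corona_count_aux, corona_count_aux]
    refine Finset.sum_le_sum (fun A hA => ?_)
    have hAn : A.card ≤ Fintype.card V := by
      simpa using Finset.card_le_univ A
    by_cases h : A.card ≤ i
    · rw [if_pos h, if_pos (by omega)]
      rw [show i + 1 - A.card = (i - A.card) + 1 by omega]
      exact Nat.choose_le_succ_of_lt_half_left (by omega)
    · rw [if_neg h]
      exact Nat.zero_le _
  · intro i hi _
    show indepCount (corona G (⊥ : SimpleGraph (Fin 2))) (i + 1) ≤
      indepCount (corona G (⊥ : SimpleGraph (Fin 2))) i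
    rw [corona_count_aux, corona_count_aux]
    refine Finset.sum_le_sum (fun A hA => ?_)
    have hAn : A.card ≤ Fintype.card V := by
      simpa using Finset.card_le_univ A
    rw [if_pos (by omega : A.card ≤ i + 1), if_pos (by omega : A.card ≤ i)]
    rw [show i + 1 - A.card = (i - A.card) + 1 by omega]
    exact nat_choose_succ_le_aux (by omega)
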